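/- Let X be a compact Hausdorff space, S ⊆ X̄ and k ≥ 2. Let the k-dilation of S be 𝔇ᵏS = {(x_0,…,x_0,x_1,…,x_1,…) : (x_n)_{n≥0} ∈ S}, where each term x_n of the original sequence is repeated k times consecutively. Then H^t_X(𝔇ᵏS) = (1/k) · H^t_X(S). -/

import Mathlib

open Set Filter Topology
open scoped ENNReal

/-- An open cover of a topological space: a family of open sets whose union is the whole space. -/
def IsOpenCover {Z : Type*} [TopologicalSpace Z] (𝒰 : Set (Set Z)) : Prop :=
  (∀ U ∈ 𝒰, IsOpen U) ∧ ⋃₀ 𝒰 = Set.univ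

/-- `coverNum S 𝒰` : the minimal cardinality `N_{S/Z}(𝒰)` of a finite subfamily of `𝒰`
whose union contains `S` (junk value `0` if there is no such finite subfamily). -/
noncomputable def coverNum {Z : Type*} (S : Set Z) (𝒰 : Set (Set Z)) : ℕ :=
  sInf {m | ∃ F : Finset (Set Z), ↑F ⊆ 𝒰 ∧ S ⊆ ⋃₀ (F : Set (Set Z)) ∧ F.card = m}

/-- The cover `𝒰̄ⁿ` of the sequence space `ℕ → Z`, consisting of the sets
`U_{i_0} × ⋯ × U_{i_{n-1}} × Z × Z × ⋯` with the `U_{i_j}` members of `𝒰`. -/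
def seqCover {Z : Type*} (𝒰 : Set (Set Z)) (n : ℕ) : Set (Set (ℕ → Z)) :=
  {V | ∃ U : ℕ → Set Z, (∀ i < n, U i ∈ 𝒰) ∧ V = {x : ℕ → Z | ∀ i < n, x i ∈ U i}}

/-- The topological entropy `H^t(S,𝒰)` of `S ⊆ Z̄ = ℕ → Z` relative to the cover `𝒰`. -/
noncomputable def entropyRel {Z : Type*} (S : Set (ℕ → Z)) (𝒰 : Set (Set Z)) : ℝ≥0∞ :=
  Filter.atTop.limsup fun n : ℕ =>
    ENNReal.ofReal ((1 / n : ℝ) * Real.log (coverNum S (seqCover 𝒰 n)))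

/-- The topological entropy `H^t_Z(S)` of `S` as a subset of the sequence space `Z̄ = ℕ → Z`. -/
noncomputable def topEntropy (Z : Type*) [TopologicalSpace Z] (S : Set (ℕ → Z)) : ℝ≥0∞ :=
  ⨆ (𝒰 : Set (Set Z)) (_ : IsOpenCover 𝒰), entropyRel S 𝒰

/-! ### Auxiliary lemmas -/

section Aux

variable {X : Type*} [TopologicalSpace X]

lemma seqCover_isOpen {𝒰 : Set (Set X)} (h𝒰 : IsOpenCover 𝒰) {n : ℕ}
    {V : Set (ℕ → X)} (hV : V ∈ seqCover 𝒰 n) : IsOpen V := by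
  obtain ⟨U, hU, rfl⟩ := hV
  have : {x : ℕ → X | ∀ i < n, x i ∈ U i}
      = ⋂ i ∈ Finset.range n, (fun x : ℕ → X => x i) ⁻¹' U i := by
    ext x; simp
  rw [this]
  exact isOpen_biInter_finset fun i hi =>
    ((h𝒰.1 _ (hU i (Finset.mem_range.mp hi))).preimage (continuous_apply i))

lemma seqCover_covers {𝒰 : Set (Set X)} (h𝒰 : IsOpenCover 𝒰) (n : ℕ) (x : ℕ → X) :
    ∃ V ∈ seqCover 𝒰 n, x ∈ V := by
  have h : ∀ i : ℕ, ∃ U ∈ 𝒰, x i ∈ U := by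
    intro i
    have : x i ∈ ⋃₀ 𝒰 := by rw [h𝒰.2]; trivial
    exact this
  choose U hU hxU using h
  exact ⟨{y | ∀ i < n, y i ∈ U i}, ⟨U, fun i _ => hU i, rfl⟩, fun i _ => hxU i⟩

lemma exists_finite_seqCover [CompactSpace X] {𝒰 : Set (Set X)} (h𝒰 : IsOpenCover 𝒰) (n : ℕ)
    (S : Set (ℕ → X)) :
    ∃ F : Finset (Set (ℕ → X)), ↑F ⊆ seqCover 𝒰 n ∧ S ⊆ ⋃₀ (F : Set (Set (ℕ → X))) := by
  classical
  have hcov : (univ : Set (ℕ → X)) ⊆ ⋃ V ∈ seqCover 𝒰 n, V := by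
    intro x _
    obtain ⟨V, hV, hxV⟩ := seqCover_covers h𝒰 n x
    exact mem_biUnion hV hxV
  obtain ⟨b', hb'sub, hb'fin, hb'cov⟩ :=
    isCompact_univ.elim_finite_subcover_image
      (fun V hV => seqCover_isOpen h𝒰 hV) hcov
  refine ⟨hb'fin.toFinset, by simpa using hb'sub, ?_⟩
  intro x hx
  have := hb'cov (mem_univ x)
  simp only [mem_iUnion] at this
  obtain ⟨V, hV, hxV⟩ := this
  exact ⟨V, by simpa using hV, hxV⟩

lemma coverNum_le_of_transfer {Z : Type*} {S T : Set Z} {𝒱 𝒲 : Set (Set Z)}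
    (hne : ∃ F : Finset (Set Z), ↑F ⊆ 𝒱 ∧ S ⊆ ⋃₀ (F : Set (Set Z)))
    (h : ∀ F : Finset (Set Z), ↑F ⊆ 𝒱 → S ⊆ ⋃₀ (F : Set (Set Z)) →
      ∃ F' : Finset (Set Z), ↑F' ⊆ 𝒲 ∧ T ⊆ ⋃₀ (F' : Set (Set Z)) ∧ F'.card ≤ F.card) :
    coverNum T 𝒲 ≤ coverNum S 𝒱 := by
  obtain ⟨F, hF1, hF2⟩ := hne
  have hmem := Nat.sInf_mem (⟨F.card, F, hF1, hF2, rfl⟩ :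
    {m | ∃ F : Finset (Set Z), ↑F ⊆ 𝒱 ∧ S ⊆ ⋃₀ (F : Set (Set Z)) ∧ F.card = m}.Nonempty)
  obtain ⟨G, hG1, hG2, hG3⟩ := hmem
  obtain ⟨G', h1, h2, h3⟩ := h G hG1 hG2
  calc coverNum T 𝒲 ≤ G'.card := Nat.sInf_le ⟨G', h1, h2, rfl⟩
    _ ≤ G.card := h3
    _ = coverNum S 𝒱 := hG3

variable [CompactSpace X]

/-- Inequality (A): `coverNum (𝔇ᵏ S) 𝒰̄ⁿ ≤ coverNum S 𝒰̄ᵐ` whenever `n ≤ m*k`. -/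
lemma coverNum_dilation_le {𝒰 : Set (Set X)} (h𝒰 : IsOpenCover 𝒰)
    (S : Set (ℕ → X)) {k : ℕ} (hk0 : 0 < k) {n m : ℕ} (hnm : n ≤ m * k) :
    coverNum ((fun x : ℕ → X => fun i => x (i / k)) '' S) (seqCover 𝒰 n)
      ≤ coverNum S (seqCover 𝒰 m) := by
  classical
  refine coverNum_le_of_transfer (exists_finite_seqCover h𝒰 m S) ?_
  intro F hF1 hF2
  set Φ : Set (ℕ → X) → Set (ℕ → X) := fun V =>
    if h : V ∈ seqCover 𝒰 m then {y : ℕ → X | ∀ i < n, y i ∈ h.choose (i / k)} else ∅ with hΦ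
  refine ⟨F.image Φ, ?_, ?_, Finset.card_image_le⟩
  · intro W hW
    simp only [Finset.coe_image, Set.mem_image, Finset.mem_coe] at hW
    obtain ⟨V, hVF, rfl⟩ := hW
    have hV : V ∈ seqCover 𝒰 m := hF1 hVF
    rw [hΦ]; simp only [dif_pos hV]
    refine ⟨fun i => hV.choose (i / k), fun i hi => ?_, rfl⟩
    exact hV.choose_spec.1 _ ((Nat.div_lt_iff_lt_mul hk0).mpr (lt_of_lt_of_le hi hnm))
  · rintro y ⟨x, hxS, rfl⟩
    obtain ⟨V, hVF, hxV⟩ := hF2 hxS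
    have hV : V ∈ seqCover 𝒰 m := hF1 hVF
    refine ⟨Φ V, by simp only [Finset.coe_image]; exact Set.mem_image_of_mem _ hVF, ?_⟩
    rw [hΦ]; simp only [dif_pos hV]
    intro i hi
    have hik : i / k < m := (Nat.div_lt_iff_lt_mul hk0).mpr (lt_of_lt_of_le hi hnm)
    have := hV.choose_spec.2 ▸ hxV
    exact this _ hik

/-- Inequality (B): `coverNum S 𝒰̄ᵐ ≤ coverNum (𝔇ᵏ S) 𝒰̄^{mk}`. -/
lemma le_coverNum_dilation {𝒰 : Set (Set X)} (h𝒰 : IsOpenCover 𝒰)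
    (S : Set (ℕ → X)) {k : ℕ} (hk0 : 0 < k) (m : ℕ) :
    coverNum S (seqCover 𝒰 m)
      ≤ coverNum ((fun x : ℕ → X => fun i => x (i / k)) '' S) (seqCover 𝒰 (m * k)) := by
  classical
  refine coverNum_le_of_transfer (exists_finite_seqCover h𝒰 (m * k) _) ?_
  intro F hF1 hF2
  set Ψ : Set (ℕ → X) → Set (ℕ → X) := fun V =>
    if h : V ∈ seqCover 𝒰 (m * k) then {x : ℕ → X | ∀ j < m, x j ∈ h.choose (j * k)} else ∅
    with hΨ
  refine ⟨F.image Ψ, ?_, ?_, Finset.card_image_le⟩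
  · intro W hW
    simp only [Finset.coe_image, Set.mem_image, Finset.mem_coe] at hW
    obtain ⟨V, hVF, rfl⟩ := hW
    have hV : V ∈ seqCover 𝒰 (m * k) := hF1 hVF
    rw [hΨ]; simp only [dif_pos hV]
    refine ⟨fun j => hV.choose (j * k), fun j hj => ?_, rfl⟩
    exact hV.choose_spec.1 _ ((Nat.mul_lt_mul_right hk0).mpr hj)
  · intro x hxS
    have hdx : (fun i => x (i / k)) ∈ ⋃₀ (F : Set (Set (ℕ → X))) :=
      hF2 (Set.mem_image_of_mem _ hxS)
    obtain ⟨V, hVF, hxV⟩ := hdx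
    have hV : V ∈ seqCover 𝒰 (m * k) := hF1 hVF
    refine ⟨Ψ V, by simp only [Finset.coe_image]; exact Set.mem_image_of_mem _ hVF, ?_⟩
    rw [hΨ]; simp only [dif_pos hV]
    intro j hj
    have hmem := hV.choose_spec.2 ▸ hxV
    have h1 : (fun i => x (i / k)) (j * k) ∈ hV.choose (j * k) :=
      hmem _ ((Nat.mul_lt_mul_right hk0).mpr hj)
    simpa [Nat.mul_div_cancel _ hk0] using h1

end Aux

lemma log_natCast_mono {a b : ℕ} (h : a ≤ b) : Real.log a ≤ Real.log b := by
  rcases Nat.eq_zero_or_pos a with rfl | ha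
  · simpa using Real.log_natCast_nonneg b
  · exact Real.log_le_log (by exact_mod_cast ha) (by exact_mod_cast h)

lemma limsup_comp_le (u : ℕ → ℝ≥0∞) (h : ℕ → ℕ) (hh : Tendsto h atTop atTop) :
    Filter.atTop.limsup (fun n => u (h n)) ≤ Filter.atTop.limsup u := by
  have heq : Filter.atTop.limsup (fun n => u (h n)) = Filter.limsup u (Filter.map h atTop) := by
    rw [Filter.limsup, Filter.limsup, Filter.map_map]
    rfl
  rw [heq]
  exact Filter.limsup_le_limsup_of_le hh

lemma le_of_forall_one_add_mul (x y : ℝ≥0∞)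
    (h : ∀ ε : ℝ, 0 < ε → x ≤ ENNReal.ofReal (1 + ε) * y) : x ≤ y := by
  rcases eq_top_or_lt_top y with rfl | hy
  · exact le_top
  apply ENNReal.le_of_forall_pos_le_add
  intro δ hδ _
  rcases eq_or_ne y 0 with rfl | hy0
  · have h1 := h 1 one_pos
    simp only [mul_zero] at h1
    exact h1.trans zero_le
  have hyt : 0 < y.toReal := ENNReal.toReal_pos hy0 hy.ne
  have hε : (0 : ℝ) < (δ : ℝ) / y.toReal := div_pos hδ hyt
  refine (h _ hε).trans_eq ?_
  rw [ENNReal.ofReal_add zero_le_one hε.le, ENNReal.ofReal_one, add_mul, one_mul]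
  congr 1
  calc ENNReal.ofReal ((δ : ℝ) / y.toReal) * y
      = ENNReal.ofReal ((δ : ℝ) / y.toReal) * ENNReal.ofReal y.toReal := by
        rw [ENNReal.ofReal_toReal hy.ne]
    _ = ENNReal.ofReal ((δ : ℝ) / y.toReal * y.toReal) := by
        rw [ENNReal.ofReal_mul hε.le]
    _ = ENNReal.ofReal (δ : ℝ) := by rw [div_mul_cancel₀ _ hyt.ne']
    _ = (δ : ℝ≥0∞) := ENNReal.ofReal_coe_nnreal

/-- The key per-cover identity. -/
lemma entropyRel_dilation {X : Type*} [TopologicalSpace X] [CompactSpace X]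
    {𝒰 : Set (Set X)} (h𝒰 : IsOpenCover 𝒰) (S : Set (ℕ → X)) {k : ℕ} (hk : 2 ≤ k) :
    entropyRel ((fun x : ℕ → X => fun n => x (n / k)) '' S) 𝒰
      = entropyRel S 𝒰 / (k : ℝ≥0∞) := by
  have hk0 : 0 < k := by omega
  have hk0' : (0 : ℝ) < (k : ℝ) := by exact_mod_cast hk0
  set D : (ℕ → X) → (ℕ → X) := fun x => fun n => x (n / k) with hD
  set a : ℕ → ℕ := fun m => coverNum S (seqCover 𝒰 m) with ha
  set c : ℕ → ℕ := fun n => coverNum (D '' S) (seqCover 𝒰 n) with hc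
  set f : ℕ → ℝ≥0∞ := fun m => ENNReal.ofReal ((1 / m : ℝ) * Real.log (a m)) with hf
  set g : ℕ → ℝ≥0∞ := fun n => ENNReal.ofReal ((1 / n : ℝ) * Real.log (c n)) with hg
  have hloga : ∀ m, (0 : ℝ) ≤ Real.log (a m) := fun m => Real.log_natCast_nonneg _
  have hentS : entropyRel S 𝒰 = Filter.atTop.limsup f := rfl
  have hentD : entropyRel (D '' S) 𝒰 = Filter.atTop.limsup g := rfl
  have hktop : (k : ℝ≥0∞) ≠ ⊤ := ENNReal.natCast_ne_top k
  have hkne : (k : ℝ≥0∞) ≠ 0 := by exact_mod_cast hk0.ne'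
  rw [hentS, hentD]
  refine le_antisymm ?_ ?_
  · -- limsup g ≤ limsup f / k
    rw [ENNReal.le_div_iff_mul_le (Or.inl hkne) (Or.inl hktop), mul_comm]
    have hmul : (k : ℝ≥0∞) * Filter.atTop.limsup g
        = Filter.atTop.limsup (fun n => (k : ℝ≥0∞) * g n) :=
      (ENNReal.limsup_const_mul_of_ne_top hktop).symm
    rw [hmul]
    refine le_of_forall_one_add_mul _ _ fun ε hε => ?_
    set h : ℕ → ℕ := fun n => n / k + 1 with hh
    have hhT : Tendsto h atTop atTop := by
      rw [Filter.tendsto_atTop_atTop]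
      intro b
      exact ⟨b * k, fun n hn => le_trans ((Nat.le_div_iff_mul_le hk0).mpr hn) (Nat.le_succ _)⟩
    have hev : ∀ᶠ n in atTop, (k : ℝ≥0∞) * g n ≤ ENNReal.ofReal (1 + ε) * f (h n) := by
      filter_upwards [Filter.eventually_ge_atTop (max 1 ⌈(k : ℝ) / ε⌉₊)] with n hn
      have hn1 : 1 ≤ n := le_trans (le_max_left _ _) hn
      have hn0 : (0 : ℝ) < (n : ℝ) := by exact_mod_cast hn1
      have hhn0 : (0 : ℝ) < ((h n : ℕ) : ℝ) := by
        have : 0 < h n := Nat.succ_pos _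
        exact_mod_cast this
      -- c n ≤ a (h n)
      have hA : c n ≤ a (h n) := by
        rw [hc, ha]
        exact coverNum_dilation_le h𝒰 S hk0
          (le_of_lt ((Nat.div_lt_iff_lt_mul hk0).mp (Nat.lt_succ_self _)))
      -- k * h n ≤ (1+ε) * n
      have hkn : (k : ℝ) * (h n : ℕ) ≤ (1 + ε) * n := by
        have h1 : (h n : ℕ) * k ≤ n + k := by
          have := Nat.div_mul_le_self n k
          calc (h n) * k = n / k * k + k := by ring
            _ ≤ n + k := by omega
        have h2 : ((h n : ℕ) : ℝ) * k ≤ (n : ℝ) + k := by exact_mod_cast h1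
        have h3 : (k : ℝ) ≤ ε * n := by
          have hceil : (⌈(k : ℝ) / ε⌉₊ : ℝ) ≤ n := by
            exact_mod_cast le_trans (le_max_right _ _) hn
          have h4 : (k : ℝ) / ε ≤ n := (Nat.le_ceil _).trans hceil
          rw [div_le_iff₀ hε] at h4
          linarith
        nlinarith [h2, h3]
      -- real inequality
      have hreal : (k : ℝ) * ((1 / n : ℝ) * Real.log (c n))
          ≤ (1 + ε) * ((1 / (h n : ℕ) : ℝ) * Real.log (a (h n))) := by
        have hlog : Real.log (c n) ≤ Real.log (a (h n)) := log_natCast_mono hA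
        have hfrac : (k : ℝ) / n ≤ (1 + ε) / (h n : ℕ) := by
          rw [div_le_div_iff₀ hn0 hhn0]
          linarith [hkn]
        calc (k : ℝ) * ((1 / n : ℝ) * Real.log (c n)) = ((k : ℝ) / n) * Real.log (c n) := by
              ring
          _ ≤ ((k : ℝ) / n) * Real.log (a (h n)) := by
              apply mul_le_mul_of_nonneg_left hlog (by positivity)
          _ ≤ ((1 + ε) / (h n : ℕ)) * Real.log (a (h n)) := by
              apply mul_le_mul_of_nonneg_right hfrac (hloga _)
          _ = (1 + ε) * ((1 / (h n : ℕ) : ℝ) * Real.log (a (h n))) := by ring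
      calc (k : ℝ≥0∞) * g n
          = ENNReal.ofReal ((k : ℝ) * ((1 / n : ℝ) * Real.log (c n))) := by
            rw [hg, ← ENNReal.ofReal_natCast k, ← ENNReal.ofReal_mul (by positivity)]
        _ ≤ ENNReal.ofReal ((1 + ε) * ((1 / (h n : ℕ) : ℝ) * Real.log (a (h n)))) :=
            ENNReal.ofReal_le_ofReal hreal
        _ = ENNReal.ofReal (1 + ε) * f (h n) := by
            rw [hf, ENNReal.ofReal_mul (by linarith)]
    calc Filter.atTop.limsup (fun n => (k : ℝ≥0∞) * g n)
        ≤ Filter.atTop.limsup (fun n => ENNReal.ofReal (1 + ε) * f (h n)) :=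
          Filter.limsup_le_limsup hev
      _ = ENNReal.ofReal (1 + ε) * Filter.atTop.limsup (fun n => f (h n)) :=
          ENNReal.limsup_const_mul_of_ne_top ENNReal.ofReal_ne_top
      _ ≤ ENNReal.ofReal (1 + ε) * Filter.atTop.limsup f :=
          by gcongr; exact limsup_comp_le f h hhT
  · -- limsup f / k ≤ limsup g
    rw [ENNReal.div_eq_inv_mul]
    have hinv : ((k : ℝ≥0∞)⁻¹) ≠ ⊤ := by
      simp [ENNReal.inv_ne_top, hkne]
    rw [← ENNReal.limsup_const_mul_of_ne_top hinv]
    have hev : ∀ᶠ m in atTop, (k : ℝ≥0∞)⁻¹ * f m ≤ g (m * k) := by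
      filter_upwards [Filter.eventually_ge_atTop 1] with m hm
      have hm0 : (0 : ℝ) < (m : ℝ) := by exact_mod_cast hm
      have hB : a m ≤ c (m * k) := le_coverNum_dilation h𝒰 S hk0 m
      have hinveq : (k : ℝ≥0∞)⁻¹ = ENNReal.ofReal ((k : ℝ)⁻¹) := by
        rw [ENNReal.ofReal_inv_of_pos hk0', ENNReal.ofReal_natCast]
      rw [hf, hg, hinveq, ← ENNReal.ofReal_mul (by positivity)]
      apply ENNReal.ofReal_le_ofReal
      have hcast : ((m * k : ℕ) : ℝ) = (m : ℝ) * k := by push_cast; ring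
      rw [hcast]
      calc (k : ℝ)⁻¹ * ((1 / m : ℝ) * Real.log (a m))
          = (1 / ((m : ℝ) * k)) * Real.log (a m) := by
            have : (k : ℝ)⁻¹ * (1 / m : ℝ) = 1 / ((m : ℝ) * k) := by
              rw [one_div, one_div, mul_inv]; ring
            rw [← mul_assoc, this]
        _ ≤ (1 / ((m : ℝ) * k)) * Real.log (c (m * k)) := by
            apply mul_le_mul_of_nonneg_left (log_natCast_mono hB) (by positivity)
    calc Filter.atTop.limsup (fun m => (k : ℝ≥0∞)⁻¹ * f m)
        ≤ Filter.atTop.limsup (fun m => g (m * k)) := Filter.limsup_le_limsup hev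
      _ ≤ Filter.atTop.limsup g := by
          apply limsup_comp_le g (fun m => m * k)
          exact Filter.tendsto_atTop_mono (fun m => Nat.le_mul_of_pos_right m hk0) tendsto_id

theorem topEntropy_dilation {X : Type*} [TopologicalSpace X] [CompactSpace X] [T2Space X]
    (S : Set (ℕ → X)) (k : ℕ) (hk : 2 ≤ k) :
    topEntropy X ((fun x : ℕ → X => fun n => x (n / k)) '' S)
      = topEntropy X S / (k : ℝ≥0∞) := by
  rw [topEntropy, topEntropy, ENNReal.iSup_div]
  refine iSup_congr fun 𝒰 => ?_
  by_cases h : IsOpenCover 𝒰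
  · rw [ciSup_pos h, ENNReal.iSup_div, ciSup_pos h]
    exact entropyRel_dilation h S hk
  · simp [h]
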